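/- Mass lower bound from concentration compactness plus interaction Morawetz bound gives a contradiction: Suppose u : ℝ × ℝ² × 𝕋 → ℂ satisfies: (a) conservation of mass m₀ = ∫|u(t)|²dxdy > 0; (b) there exists C₀ > 0 and a function x(t) such that ∫_{|x−x(t)|≤C₀} ‖u(t,x,·)‖²_{L²_y} dx ≥ m₀/2 for all t; (c) the Gagliardo–Nirenberg-type bound ∫_{|x−x(t)|≤C₀}‖u(t,x,·)‖²_{L²_y}dx ≲ C₀^{3/2} ‖|∇_x|^{1/2}(|u(t)|²)‖_{L²_{x,y}}; (d) the space-time bound ∫_{−T}^{T} ‖|∇_x|^{1/2}(|u(t)|²)‖²_{L²_{x,y}} dt ≤ B uniformly in T, for some finite B. Then u ≡ 0, i.e., m₀ = 0. -/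

import Mathlib

open MeasureTheory

noncomputable section

instance : Fact (0 < 2 * Real.pi) := ⟨Real.two_pi_pos⟩

abbrev E2 := EuclideanSpace ℝ (Fin 2)
abbrev T1 := AddCircle (2 * Real.pi)

/-- `‖|∇_x|^{1/2}(|u(t)|²)‖_{L²_{x,y}}`, expressed via Plancherel on the Fourier side:
the square root of `∫_𝕋 ∫_{ℝ²} |ξ| |𝓕_x(|u(t,·,y)|²)(ξ)|² dξ dy`. -/
noncomputable def halfDerivMassNorm (u : ℝ → E2 → T1 → ℂ) (t : ℝ) : ℝ :=
  Real.sqrt (∫ y : T1, ∫ ξ : E2,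
    ‖ξ‖ * ‖VectorFourier.fourierIntegral Real.fourierChar volume (innerₗ E2)
      (fun x : E2 => ((‖u t x y‖ ^ 2 : ℝ) : ℂ)) ξ‖ ^ 2)

/-- Rigidity: a solution with conserved positive mass `m₀`, localized mass concentration
(b), the Gagliardo–Nirenberg bound (c), and the uniform interaction Morawetz space-time
bound (d) must vanish: `m₀ = 0` (a contradiction with `m₀ > 0`, so no such almost-periodic
solution exists). -/
theorem stmt11 (u : ℝ → E2 → T1 → ℂ) (xc : ℝ → E2) (C₀ B m₀ K : ℝ)
    (hC₀ : 0 < C₀) (hm₀ : 0 < m₀) (hK : 0 < K)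
    (hmass : ∀ t, (∫ x : E2, ∫ y : T1, ‖u t x y‖ ^ 2) = m₀)
    (hconc : ∀ t, m₀ / 2 ≤
      ∫ x in Metric.closedBall (xc t) C₀, ∫ y : T1, ‖u t x y‖ ^ 2)
    (hGN : ∀ t, (∫ x in Metric.closedBall (xc t) C₀, ∫ y : T1, ‖u t x y‖ ^ 2)
      ≤ K * C₀ ^ (3 / 2 : ℝ) * halfDerivMassNorm u t)
    (hint : ∀ T : ℝ, IntegrableOn (fun t => (halfDerivMassNorm u t) ^ 2) (Set.Ioc (-T) T))
    (hB : ∀ T : ℝ, (∫ t in Set.Ioc (-T) T, (halfDerivMassNorm u t) ^ 2) ≤ B) :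
    m₀ = 0 := by
  by_contra hne
  set D : ℝ := K * C₀ ^ (3 / 2 : ℝ) with hD
  have hDpos : 0 < D := mul_pos hK (Real.rpow_pos_of_pos hC₀ _)
  set c : ℝ := m₀ / (2 * D) with hc
  have hcpos : 0 < c := div_pos hm₀ (by positivity)
  have hH : ∀ t, c ≤ halfDerivMassNorm u t := by
    intro t
    have h1 : m₀ / 2 ≤ D * halfDerivMassNorm u t := (hconc t).trans (hGN t)
    rw [hc, div_le_iff₀ (by positivity)]
    calc m₀ = (m₀ / 2) * 2 := by ring
    _ ≤ (D * halfDerivMassNorm u t) * 2 := by linarith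
    _ = halfDerivMassNorm u t * (2 * D) := by ring
  set T : ℝ := max 1 ((B + 1) / (2 * c ^ 2)) with hT
  have hT1 : (1:ℝ) ≤ T := le_max_left _ _
  have hTpos : 0 < T := lt_of_lt_of_le one_pos hT1
  have hlow : c ^ 2 * (2 * T) ≤ ∫ t in Set.Ioc (-T) T, (halfDerivMassNorm u t) ^ 2 := by
    have := setIntegral_mono_on (μ := volume) (s := Set.Ioc (-T) T)
      (f := fun _ => c ^ 2) (g := fun t => (halfDerivMassNorm u t) ^ 2)
      (integrableOn_const measure_Ioc_lt_top.ne) (hint T)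
      measurableSet_Ioc (fun t _ => pow_le_pow_left₀ hcpos.le (hH t) 2)
    calc c ^ 2 * (2 * T) = (volume (Set.Ioc (-T) T)).toReal • (c ^ 2) := by
          rw [Real.volume_Ioc, ENNReal.toReal_ofReal (by linarith)]
          simp [smul_eq_mul]; ring
      _ = ∫ _ in Set.Ioc (-T) T, (c ^ 2) := (setIntegral_const _).symm
      _ ≤ _ := this
  have hBT : (B + 1) / (2 * c ^ 2) ≤ T := le_max_right _ _
  have hkey : B + 1 ≤ c ^ 2 * (2 * T) := by
    rw [div_le_iff₀ (by positivity)] at hBT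
    nlinarith
  have := (hlow.trans (hB T))
  linarith
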